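/- Let (f_j)_{j≥1} be a sequence of measurable functions on a probability space, uniformly bounded by a constant M, each with zero mean, and mutually orthogonal in L² (∫ f_i f_j dμ = 0 for i ≠ j). Then (1/m)·∑_{j=1}^m f_j(x) → 0 for μ-almost every x. -/

import Mathlib

open MeasureTheory Filter

private lemma nat_sqrt_tendsto_atTop : Tendsto Nat.sqrt atTop atTop :=
  tendsto_atTop_atTop_of_monotone (fun _ _ h => Nat.sqrt_le_sqrt h)
    (fun b => ⟨b ^ 2, (Nat.sqrt_eq' b).ge⟩)

/-- uniformly bounded, mean-zero, mutually orthogonal functions on a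
probability space satisfy `(1/m) ∑_{j<m} f_j → 0` almost everywhere. -/
theorem stmt3 {Ω : Type*} [MeasurableSpace Ω] (μ : Measure Ω) [IsProbabilityMeasure μ]
    (f : ℕ → Ω → ℝ) (M : ℝ)
    (hmeas : ∀ j, Measurable (f j))
    (hbdd : ∀ j x, |f j x| ≤ M)
    (hmean : ∀ j, ∫ x, f j x ∂μ = 0)
    (horth : ∀ i j, i ≠ j → ∫ x, f i x * f j x ∂μ = 0) :
    ∀ᵐ x ∂μ, Tendsto (fun m : ℕ => (∑ j ∈ Finset.range m, f j x) / m) atTop (nhds 0) := by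
  obtain ⟨x₀, -⟩ := MeasureTheory.nonempty_of_measure_ne_zero
    (show μ Set.univ ≠ 0 by simp)
  have hM : 0 ≤ M := (abs_nonneg _).trans (hbdd 0 x₀)
  set S : ℕ → Ω → ℝ := fun m x => ∑ j ∈ Finset.range m, f j x with hSdef
  have hSmeas : ∀ m, Measurable (S m) := fun m =>
    Finset.measurable_sum _ (fun j _ => hmeas j)
  -- integrability of products
  have hint : ∀ i j, Integrable (fun x => f i x * f j x) μ := by
    intro i j
    refine ⟨((hmeas i).mul (hmeas j)).aestronglyMeasurable, ?_⟩
    refine HasFiniteIntegral.of_bounded (C := M * M) (ae_of_all _ fun x => ?_)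
    calc ‖f i x * f j x‖ = |f i x| * |f j x| := abs_mul _ _
      _ ≤ M * M := mul_le_mul (hbdd i x) (hbdd j x) (abs_nonneg _) hM
  -- second moment bound
  have hSsq_eq : ∀ m x, (S m x) ^ 2
      = ∑ i ∈ Finset.range m, ∑ j ∈ Finset.range m, f i x * f j x := by
    intro m x
    rw [sq, hSdef, Finset.sum_mul_sum]
  have hSsq_int : ∀ m, Integrable (fun x => (S m x) ^ 2) μ := by
    intro m
    have : Integrable (fun x => ∑ i ∈ Finset.range m, ∑ j ∈ Finset.range m,
        f i x * f j x) μ :=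
      integrable_finset_sum _ (fun i _ => integrable_finset_sum _ (fun j _ => hint i j))
    exact this.congr (ae_of_all _ fun x => (hSsq_eq m x).symm)
  have hvar : ∀ m : ℕ, ∫ x, (S m x) ^ 2 ∂μ ≤ m * M ^ 2 := by
    intro m
    have h1 : ∫ x, (S m x) ^ 2 ∂μ
        = ∑ i ∈ Finset.range m, ∑ j ∈ Finset.range m, ∫ x, f i x * f j x ∂μ := by
      rw [integral_congr_ae (ae_of_all _ (hSsq_eq m))]
      rw [integral_finset_sum _ (fun i _ => integrable_finset_sum _ (fun j _ => hint i j))]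
      exact Finset.sum_congr rfl fun i _ => integral_finset_sum _ (fun j _ => hint i j)
    have h2 : ∀ i ∈ Finset.range m,
        ∑ j ∈ Finset.range m, ∫ x, f i x * f j x ∂μ = ∫ x, f i x * f i x ∂μ := by
      intro i hi
      exact Finset.sum_eq_single_of_mem i hi (fun j _ hji => horth i j (Ne.symm hji))
    rw [h1, Finset.sum_congr rfl h2]
    have h3 : ∀ i : ℕ, ∫ x, f i x * f i x ∂μ ≤ M ^ 2 := by
      intro i
      have : ∫ x, f i x * f i x ∂μ ≤ ∫ _, M ^ 2 ∂μ := by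
        refine integral_mono (hint i i) (integrable_const _) fun x => ?_
        calc f i x * f i x ≤ |f i x * f i x| := le_abs_self _
          _ = |f i x| * |f i x| := abs_mul _ _
          _ ≤ M * M := mul_le_mul (hbdd i x) (hbdd i x) (abs_nonneg _) hM
          _ = M ^ 2 := (sq M).symm
      simpa using this
    calc ∑ i ∈ Finset.range m, ∫ x, f i x * f i x ∂μ
        ≤ ∑ _i ∈ Finset.range m, M ^ 2 := Finset.sum_le_sum fun i _ => h3 i
      _ = m * M ^ 2 := by simp [mul_comm]
  -- the subsequence along squares
  set T : ℕ → Ω → ℝ := fun n x => S (n ^ 2) x / (n : ℝ) ^ 2 with hTdef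
  have hTmeas : ∀ n, Measurable (T n) := fun n => (hSmeas _).div_const _
  have hTint : ∀ n, Integrable (fun x => (T n x) ^ 2) μ := by
    intro n
    have : (fun x => (T n x) ^ 2) = fun x => (S (n ^ 2) x) ^ 2 / ((n : ℝ) ^ 2) ^ 2 := by
      funext x; rw [hTdef]; ring
    rw [this]
    exact (hSsq_int _).div_const _
  have hTnorm : ∀ n : ℕ, 1 ≤ n → ∫ x, (T n x) ^ 2 ∂μ ≤ M ^ 2 / (n : ℝ) ^ 2 := by
    intro n hn
    have hn' : (0:ℝ) < (n : ℝ) ^ 2 := by positivity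
    have : ∫ x, (T n x) ^ 2 ∂μ = (∫ x, (S (n ^ 2) x) ^ 2 ∂μ) / ((n : ℝ) ^ 2) ^ 2 := by
      rw [← integral_div]
      refine integral_congr_ae (ae_of_all _ fun x => ?_)
      rw [hTdef]; ring
    rw [this, div_le_div_iff₀ (by positivity) hn']
    calc (∫ x, (S (n ^ 2) x) ^ 2 ∂μ) * (n : ℝ) ^ 2
        ≤ ((n ^ 2 : ℕ) * M ^ 2) * (n : ℝ) ^ 2 := by
          exact mul_le_mul_of_nonneg_right (hvar _) (le_of_lt hn')
      _ = M ^ 2 * ((n : ℝ) ^ 2) ^ 2 := by push_cast; ring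
  -- a.e. convergence along the subsequence
  have key : ∀ᵐ x ∂μ, Tendsto (fun n => T n x) atTop (nhds 0) := by
    have hlint : ∀ᵐ x ∂μ, (∑' n : ℕ, ENNReal.ofReal ((T n x) ^ 2)) < ⊤ := by
      refine ae_lt_top ?_ ?_
      · exact Measurable.ennreal_tsum fun n => ((hTmeas n).pow_const 2).ennreal_ofReal
      · rw [lintegral_tsum fun n =>
          (((hTmeas n).pow_const 2).ennreal_ofReal).aemeasurable]
        have heq : ∀ n : ℕ, ∫⁻ x, ENNReal.ofReal ((T n x) ^ 2) ∂μ
            = ENNReal.ofReal (∫ x, (T n x) ^ 2 ∂μ) := fun n =>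
          (ofReal_integral_eq_lintegral_ofReal (hTint n)
            (ae_of_all _ fun x => sq_nonneg _)).symm
        have hle : ∀ n : ℕ, ∫⁻ x, ENNReal.ofReal ((T n x) ^ 2) ∂μ
            ≤ ENNReal.ofReal (M ^ 2 / (n : ℝ) ^ 2) := by
          intro n
          rcases Nat.eq_zero_or_pos n with rfl | hn
          · rw [heq 0]
            have : ∀ x, T 0 x = 0 := by
              intro x; rw [hTdef]; simp
            simp [this]
          · rw [heq n]
            exact ENNReal.ofReal_le_ofReal (hTnorm n hn)
        refine (lt_of_le_of_lt (ENNReal.tsum_le_tsum hle) ?_).ne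
        have hsum : Summable (fun n : ℕ => M ^ 2 / (n : ℝ) ^ 2) := by
          simpa [div_eq_mul_inv] using
            (Real.summable_one_div_nat_pow.mpr one_lt_two).mul_left (M ^ 2)
        rw [← ENNReal.ofReal_tsum_of_nonneg (fun n => by positivity) hsum]
        exact ENNReal.ofReal_lt_top
    filter_upwards [hlint] with x hx
    have hsum : Summable (fun n => (T n x) ^ 2) := by
      have h1 := ENNReal.summable_toReal hx.ne
      have : (fun n => (ENNReal.ofReal ((T n x) ^ 2)).toReal)
          = fun n => (T n x) ^ 2 := by
        funext n; exact ENNReal.toReal_ofReal (sq_nonneg _)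
      rwa [this] at h1
    have hsq : Tendsto (fun n => (T n x) ^ 2) atTop (nhds 0) := hsum.tendsto_atTop_zero
    rw [tendsto_zero_iff_norm_tendsto_zero]
    have : (fun n => ‖T n x‖) = fun n => Real.sqrt ((T n x) ^ 2) := by
      funext n; rw [Real.sqrt_sq_eq_abs]; rfl
    rw [this]
    simpa [Function.comp_def] using (Real.continuous_sqrt.tendsto 0).comp hsq
  -- gap-filling using boundedness
  filter_upwards [key] with x hx
  have hbound : ∀ m : ℕ, 1 ≤ m →
      |S m x / m| ≤ |T (Nat.sqrt m) x| + 2 * M / (Nat.sqrt m) := by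
    intro m hm
    set n := Nat.sqrt m with hn
    have hn1 : 1 ≤ n := by
      rw [hn]; exact Nat.sqrt_pos.mpr hm
    have hle : n ^ 2 ≤ m := Nat.sqrt_le' m
    have hlt : m < (n + 1) ^ 2 := Nat.lt_succ_sqrt' m
    have hdiff : m - n ^ 2 ≤ 2 * n := by
      have h2 : m < n ^ 2 + (2 * n + 1) := by
        calc m < (n + 1) ^ 2 := hlt
          _ = n ^ 2 + (2 * n + 1) := by ring
      obtain ⟨k, hk⟩ : ∃ k, n ^ 2 = k := ⟨_, rfl⟩
      rw [hk] at hle h2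
      omega
    have hSdiff : |S m x - S (n ^ 2) x| ≤ (2 * n : ℕ) * M := by
      have : S m x - S (n ^ 2) x = ∑ j ∈ Finset.Ico (n ^ 2) m, f j x := by
        rw [hSdef]
        rw [Finset.sum_Ico_eq_sub _ hle]
      rw [this]
      calc |∑ j ∈ Finset.Ico (n ^ 2) m, f j x|
          ≤ ∑ j ∈ Finset.Ico (n ^ 2) m, |f j x| := Finset.abs_sum_le_sum_abs _ _
        _ ≤ ∑ _j ∈ Finset.Ico (n ^ 2) m, M := Finset.sum_le_sum fun j _ => hbdd j x
        _ = ((m - n ^ 2 : ℕ) : ℝ) * M := by rw [Finset.sum_const, Nat.card_Ico]; simp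
        _ ≤ (2 * n : ℕ) * M := by
            exact mul_le_mul_of_nonneg_right (by exact_mod_cast hdiff) hM
    have hmpos : (0:ℝ) < m := by exact_mod_cast hm
    have hnpos : (0:ℝ) < (n:ℝ) := by exact_mod_cast hn1
    have hn2m : ((n:ℝ)) ^ 2 ≤ (m:ℝ) := by exact_mod_cast (by push_cast at hle ⊢; exact_mod_cast hle : ((n ^ 2 : ℕ) : ℝ) ≤ (m:ℝ))
    have hn2pos : (0:ℝ) < (n:ℝ) ^ 2 := by positivity
    calc |S m x / m| = |S m x| / m := by rw [abs_div, abs_of_pos hmpos]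
      _ ≤ (|S (n ^ 2) x| + (2 * n : ℕ) * M) / m := by
          gcongr
          calc |S m x| = |S (n ^ 2) x + (S m x - S (n ^ 2) x)| := by ring_nf
            _ ≤ |S (n ^ 2) x| + |S m x - S (n ^ 2) x| := abs_add_le _ _
            _ ≤ |S (n ^ 2) x| + (2 * n : ℕ) * M := by linarith [hSdiff]
      _ ≤ (|S (n ^ 2) x| + (2 * n : ℕ) * M) / ((n:ℝ) ^ 2) := by
          gcongr <;> first | positivity | exact hn2m
      _ = |T n x| + 2 * M / n := by
          rw [hTdef]
          rw [abs_div, abs_of_pos hn2pos]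
          push_cast
          field_simp
  have hrhs : Tendsto (fun m : ℕ => |T (Nat.sqrt m) x| + 2 * M / (Nat.sqrt m))
      atTop (nhds 0) := by
    have h1 : Tendsto (fun n : ℕ => |T n x| + 2 * M / n) atTop (nhds 0) := by
      have ha : Tendsto (fun n : ℕ => |T n x|) atTop (nhds 0) := by
        have := hx.abs; simpa using this
      have hb : Tendsto (fun n : ℕ => 2 * M / n) atTop (nhds 0) :=
        tendsto_const_div_atTop_nhds_zero_nat _
      simpa using ha.add hb
    exact h1.comp nat_sqrt_tendsto_atTop
  rw [tendsto_zero_iff_norm_tendsto_zero]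
  refine squeeze_zero' (Eventually.of_forall fun m => norm_nonneg _) ?_ hrhs
  filter_upwards [eventually_ge_atTop 1] with m hm
  exact hbound m hm
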